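/- Let a, b, j, r be integers with 1 < a ≤ b, j ≥ a, and r ≥ 0. Let φ : ℕ×ℕ → ℕ be the monoid homomorphism φ(c₁,c₂) = c₁ + b·c₂, and let Φ be the induced map on finite multisets (applying φ to each element). Set μ₀ = (1,0)^{j}·(0,1)^r and μ₁ = (1,0)^{j−a}·(a,0)·(0,1)^r, as multisets of nonzero elements of ℕ×ℕ, and ρ₀ = 1^{j}·b^r and ρ₁ = 1^{j−a}·a·b^r, as multisets of positive integers. Then Φ restricts to a bijection from {λ : μ₀ ≤ λ} ∖ {λ : μ₁ ≤ λ} onto {λ : ρ₀ ≤ λ} ∖ {λ : ρ₁ ≤ λ} (refinement order on multisets over ℕ×ℕ and over ℕ respectively), and moreover m(Φ(λ)) = m(λ) for every λ in the domain, i.e., the bijection preserves multiplicity partitions. (This is the bijection established in the proof of Lemma 5.21 of the paper.) -/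

import Mathlib

/-- An elementary merge replaces two elements `x`, `y` of a multiset by the single
element `x + y`. -/
def ElemMerge {M : Type*} [AddCommMonoid M] (μ ν : Multiset M) : Prop :=
  ∃ (x y : M) (rest : Multiset M), μ = x ::ₘ y ::ₘ rest ∧ ν = (x + y) ::ₘ rest

/-- The refinement order: `Refines μ λ` iff `λ` can be obtained from `μ` by a finite
(possibly empty) sequence of elementary merges. -/
def Refines {M : Type*} [AddCommMonoid M] : Multiset M → Multiset M → Prop :=
  Relation.ReflTransGen ElemMerge

/-- The multiplicity partition `m(λ)`: the finite multiset of multiplicities with which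
the distinct elements of `λ` occur. -/
noncomputable def multPartition {M : Type*} (lam : Multiset M) : Multiset ℕ :=
  letI := Classical.decEq M
  lam.dedup.map fun x => lam.count x

section Lemmas
variable {M : Type*} [AddCommMonoid M] {N : Type*} [AddCommMonoid N]

lemma Refines.sum_eq {μ lam : Multiset M} (h : Refines μ lam) : lam.sum = μ.sum := by
  induction h with
  | refl => rfl
  | tail _ h ih =>
    obtain ⟨x, y, rest, h1, h2⟩ := h
    subst h2
    rw [h1] at ih
    simp only [Multiset.sum_cons] at *
    rw [← ih, add_assoc]

lemma Refines.not_zero_mem {M : Type*} [AddCommMonoid M] [PartialOrder M] [CanonicallyOrderedAdd M]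
    {μ lam : Multiset M} (h : Refines μ lam) (h0 : (0 : M) ∉ μ) : (0 : M) ∉ lam := by
  induction h with
  | refl => exact h0
  | tail _ h ih =>
    obtain ⟨x, y, rest, h1, h2⟩ := h
    subst h2
    rw [h1] at ih
    simp only [Multiset.mem_cons, not_or] at *
    refine ⟨?_, ih.2.2⟩
    intro hxy
    exact ih.1 (add_eq_zero.mp hxy.symm).1.symm

lemma ElemMerge.add_right {μ ν : Multiset M} (σ : Multiset M) (h : ElemMerge μ ν) :
    ElemMerge (μ + σ) (ν + σ) := by
  obtain ⟨x, y, rest, h1, h2⟩ := h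
  exact ⟨x, y, rest + σ, by simp [h1, Multiset.cons_add], by simp [h2, Multiset.cons_add]⟩

lemma Refines.add_right {μ ν : Multiset M} (σ : Multiset M) (h : Refines μ ν) :
    Refines (μ + σ) (ν + σ) :=
  Relation.ReflTransGen.lift (· + σ) (fun _ _ hab => hab.add_right σ) _ _ h

lemma Refines.add {μ ν μ' ν' : Multiset M} (h : Refines μ ν) (h' : Refines μ' ν') :
    Refines (μ + μ') (ν + ν') := by
  refine Relation.ReflTransGen.trans (h.add_right μ') ?_
  rw [add_comm ν μ', add_comm ν ν']
  exact h'.add_right ν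

lemma refines_single_sum : ∀ (μ : Multiset M), μ ≠ 0 → Refines μ {μ.sum} := by
  have key : ∀ n (μ : Multiset M), μ.card = n + 1 → Refines μ {μ.sum} := by
    intro n
    induction n with
    | zero =>
      intro μ hc
      obtain ⟨x, rfl⟩ := Multiset.card_eq_one.mp hc
      simp only [Multiset.sum_singleton]
      exact Relation.ReflTransGen.refl
    | succ n ih =>
      intro μ hc
      obtain ⟨x, hx⟩ := Multiset.exists_mem_of_ne_zero (show μ ≠ 0 by
        intro h0; rw [h0] at hc; simp at hc)
      obtain ⟨s, rfl⟩ := Multiset.exists_cons_of_mem hx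
      obtain ⟨y, hy⟩ := Multiset.exists_mem_of_ne_zero (show s ≠ 0 by
        intro h0; rw [h0] at hc; simp at hc)
      obtain ⟨t, rfl⟩ := Multiset.exists_cons_of_mem hy
      have hm : ElemMerge (x ::ₘ y ::ₘ t) ((x + y) ::ₘ t) := ⟨x, y, t, rfl, rfl⟩
      have hcard : ((x + y) ::ₘ t).card = n + 1 := by
        simp only [Multiset.card_cons] at hc ⊢; omega
      have h2 := ih ((x + y) ::ₘ t) hcard
      have hsum : ((x + y) ::ₘ t).sum = (x ::ₘ y ::ₘ t).sum := by
        simp [add_assoc]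
      rw [hsum] at h2
      exact Relation.ReflTransGen.head hm h2
  intro μ hμ
  obtain ⟨n, hn⟩ : ∃ n, μ.card = n + 1 := by
    have := Multiset.card_pos.mpr hμ
    exact ⟨μ.card - 1, by omega⟩
  exact key n μ hn

lemma refines_bind (lam : Multiset M) (f : M → Multiset M)
    (hne : ∀ x ∈ lam, f x ≠ 0) (hsum : ∀ x ∈ lam, (f x).sum = x) :
    Refines (lam.bind f) lam := by
  induction lam using Multiset.induction with
  | empty => simp only [Multiset.zero_bind]; exact Relation.ReflTransGen.refl
  | cons x s ih =>
    rw [Multiset.cons_bind]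
    have h1 : Refines (f x) {x} := by
      have := refines_single_sum (f x) (hne x (Multiset.mem_cons_self x s))
      rwa [hsum x (Multiset.mem_cons_self x s)] at this
    have h2 := ih (fun y hy => hne y (Multiset.mem_cons_of_mem hy))
      (fun y hy => hsum y (Multiset.mem_cons_of_mem hy))
    have := h1.add h2
    rwa [Multiset.singleton_add] at this

lemma Refines.map (f : M → N) (hf : ∀ x y, f (x + y) = f x + f y)
    {μ lam : Multiset M} (h : Refines μ lam) : Refines (μ.map f) (lam.map f) := by
  refine Relation.ReflTransGen.lift (Multiset.map f) ?_ _ _ h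
  rintro u v ⟨x, y, rest, h1, h2⟩
  exact ⟨f x, f y, rest.map f, by simp [h1], by simp [h2, hf]⟩

lemma exists_of_refines_map (f : M → N) (hf : ∀ x y, f (x + y) = f x + f y) {μ : Multiset M} {ν : Multiset N}
    (h : Refines (μ.map f) ν) : ∃ lam, Refines μ lam ∧ ν = lam.map f := by
  classical
  induction h with
  | refl => exact ⟨μ, Relation.ReflTransGen.refl, rfl⟩
  | tail _ h ih =>
    obtain ⟨lam', h1, rfl⟩ := ih
    obtain ⟨u, v, rest, h2, h3⟩ := h
    obtain ⟨x, hx, hfx, h4⟩ := (Multiset.map_eq_cons f lam' (v ::ₘ rest) u).mpr h2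
    obtain ⟨y, hy, hfy, h5⟩ := (Multiset.map_eq_cons f (lam'.erase x) rest v).mpr h4
    refine ⟨(x + y) ::ₘ (lam'.erase x).erase y, ?_, ?_⟩
    · refine h1.tail ⟨x, y, (lam'.erase x).erase y, ?_, rfl⟩
      rw [Multiset.cons_erase hy, Multiset.cons_erase hx]
    · rw [h3]
      simp [hfx, hfy, h5, hf]

end Lemmas

section Chars

lemma pair_char (j r : ℕ) (lam : Multiset (ℕ × ℕ)) :
    Refines (Multiset.replicate j (1, 0) + Multiset.replicate r (0, 1)) lam ↔
      lam.sum = (j, r) ∧ (0, 0) ∉ lam := by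
  have hsum0 : (Multiset.replicate j ((1:ℕ), (0:ℕ)) + Multiset.replicate r (0, 1)).sum
      = (j, r) := by
    simp [Multiset.sum_replicate, Prod.ext_iff]
  constructor
  · intro h
    refine ⟨h.sum_eq.trans hsum0, ?_⟩
    have : ((0,0) : ℕ × ℕ) = 0 := rfl
    rw [this]
    refine h.not_zero_mem ?_
    simp [Multiset.mem_replicate, Prod.ext_iff]
  · rintro ⟨hs, h0⟩
    set f : ℕ × ℕ → Multiset (ℕ × ℕ) :=
      fun p => Multiset.replicate p.1 (1, 0) + Multiset.replicate p.2 (0, 1) with hf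
    have hbind : ∀ s : Multiset (ℕ × ℕ),
        s.bind f = Multiset.replicate s.sum.1 (1, 0) + Multiset.replicate s.sum.2 (0, 1) := by
      intro s
      induction s using Multiset.induction with
      | empty => simp
      | cons x t ih =>
        rw [Multiset.cons_bind, ih]
        simp only [Multiset.sum_cons, Prod.fst_add, Prod.snd_add, Multiset.replicate_add, hf]
        abel
    have := refines_bind lam f ?_ ?_
    · rwa [hbind, hs] at this
    · intro x hx
      have hx0 : x ≠ (0, 0) := fun h => h0 (h ▸ hx)
      simp only [hf, ne_eq]
      intro h1
      apply hx0
      have hc := congrArg Multiset.card h1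
      simp only [Multiset.card_add, Multiset.card_replicate, Multiset.card_zero] at hc
      obtain ⟨x1, x2⟩ := x
      simp only [Prod.mk.injEq]
      omega
    · intro x hx
      simp [hf, Multiset.sum_replicate, Prod.ext_iff]

lemma triple_char (u w : ℕ) (κ : Multiset (ℕ × ℕ × ℕ)) :
    Refines (Multiset.replicate u (1, 0, 0) + ((0, 1, 0) ::ₘ Multiset.replicate w (0, 0, 1))) κ ↔
      κ.sum = (u, 1, w) ∧ (0, 0, 0) ∉ κ := by
  have hsum0 : (Multiset.replicate u ((1:ℕ), (0:ℕ), (0:ℕ))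
      + ((0, 1, 0) ::ₘ Multiset.replicate w (0, 0, 1))).sum = (u, 1, w) := by
    simp [Multiset.sum_replicate, Prod.ext_iff]
  constructor
  · intro h
    refine ⟨h.sum_eq.trans hsum0, ?_⟩
    have : ((0,0,0) : ℕ × ℕ × ℕ) = 0 := rfl
    rw [this]
    refine h.not_zero_mem ?_
    simp [Multiset.mem_replicate, Prod.ext_iff]
  · rintro ⟨hs, h0⟩
    set f : ℕ × ℕ × ℕ → Multiset (ℕ × ℕ × ℕ) :=
      fun p => Multiset.replicate p.1 (1, 0, 0) + Multiset.replicate p.2.1 (0, 1, 0)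
        + Multiset.replicate p.2.2 (0, 0, 1) with hf
    have hbind : ∀ s : Multiset (ℕ × ℕ × ℕ),
        s.bind f = Multiset.replicate s.sum.1 (1, 0, 0)
          + Multiset.replicate s.sum.2.1 (0, 1, 0) + Multiset.replicate s.sum.2.2 (0, 0, 1) := by
      intro s
      induction s using Multiset.induction with
      | empty => simp
      | cons x t ih =>
        rw [Multiset.cons_bind, ih]
        simp only [Multiset.sum_cons, Prod.fst_add, Prod.snd_add, Multiset.replicate_add, hf]
        abel
    have := refines_bind κ f ?_ ?_
    · rw [hbind, hs] at this
      simpa [Multiset.singleton_add, add_assoc] using this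
    · intro x hx
      have hx0 : x ≠ (0, 0, 0) := fun h => h0 (h ▸ hx)
      simp only [hf, ne_eq]
      intro h1
      apply hx0
      have hc := congrArg Multiset.card h1
      simp only [Multiset.card_add, Multiset.card_replicate, Multiset.card_zero] at hc
      obtain ⟨x1, x2, x3⟩ := x
      simp only [] at hc
      simp only [Prod.mk.injEq]
      omega
    · intro x hx
      simp [hf, Multiset.sum_replicate, Prod.ext_iff]

end Chars

section Aux

lemma multPartition_map {M N : Type*} (f : M → N) (lam : Multiset M)
    (hinj : ∀ x ∈ lam, ∀ y ∈ lam, f x = f y → x = y) :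
    multPartition (lam.map f) = multPartition lam := by
  classical
  unfold multPartition
  have hd : (lam.map f).dedup = lam.dedup.map f := by
    rw [(Multiset.Nodup.ext (Multiset.nodup_dedup _)
      (Multiset.Nodup.map_on (fun x hx y hy h => hinj x (Multiset.mem_dedup.mp hx)
        y (Multiset.mem_dedup.mp hy) h) (Multiset.nodup_dedup lam)))]
    intro u
    simp only [Multiset.mem_dedup, Multiset.mem_map]
  rw [hd, Multiset.map_map]
  refine Multiset.map_congr rfl ?_
  intro x hx
  rw [Multiset.mem_dedup] at hx
  simp only [Function.comp_apply]
  rw [Multiset.count_map, Multiset.count_eq_card_filter_eq]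
  congr 1
  refine Multiset.filter_congr ?_
  intro y hy
  constructor
  · intro h; exact hinj x hx y hy h
  · intro h; rw [h]

lemma eq_of_le_of_sum_le {ι : Type*} (s : Multiset ι) (f g : ι → ℕ)
    (hle : ∀ x ∈ s, f x ≤ g x) (hsum : (s.map g).sum ≤ (s.map f).sum) :
    ∀ x ∈ s, f x = g x := by
  induction s using Multiset.induction with
  | empty => simp
  | cons x t ih =>
    have h1 : (t.map f).sum ≤ (t.map g).sum :=
      Multiset.sum_map_le_sum_map f g (fun i hi => hle i (Multiset.mem_cons_of_mem hi))
    have h2 : f x ≤ g x := hle x (Multiset.mem_cons_self x t)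
    rw [Multiset.map_cons, Multiset.map_cons, Multiset.sum_cons, Multiset.sum_cons] at hsum
    intro y hy
    rcases Multiset.mem_cons.mp hy with rfl | hy'
    · omega
    · exact ih (fun i hi => hle i (Multiset.mem_cons_of_mem hi)) (by omega) y hy'

lemma sum_map_pair (s : Multiset (ℕ × ℕ)) (c d : ℕ) :
    (s.map fun p => c * p.1 + d * p.2).sum = c * s.sum.1 + d * s.sum.2 := by
  induction s using Multiset.induction with
  | empty => simp
  | cons x t ih => simp [ih, Prod.fst_add, Prod.snd_add]; ring

lemma sum_map_triple (s : Multiset (ℕ × ℕ × ℕ)) (c d e : ℕ) :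
    (s.map fun q => c * q.1 + d * q.2.1 + e * q.2.2).sum
      = c * s.sum.1 + d * s.sum.2.1 + e * s.sum.2.2 := by
  induction s using Multiset.induction with
  | empty => simp
  | cons x t ih => simp [ih, Prod.fst_add, Prod.snd_add]; ring

end Aux

/-- The bijection in the proof of Lemma 5.21 of the paper: with `φ(c₁,c₂) = c₁ + b·c₂`,
the induced map `Φ` on multisets restricts to a bijection
`{λ : μ₀ ≤ λ} ∖ {λ : μ₁ ≤ λ} → {λ : ρ₀ ≤ λ} ∖ {λ : ρ₁ ≤ λ}`
preserving multiplicity partitions, where `μ₀ = (1,0)^j (0,1)^r`,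
`μ₁ = (1,0)^{j−a} (a,0) (0,1)^r`, `ρ₀ = 1^j b^r`, `ρ₁ = 1^{j−a} a b^r`. -/
theorem stmt5 (a b j r : ℕ) (ha : 1 < a) (hab : a ≤ b) (hj : a ≤ j) :
    Set.BijOn (fun lam : Multiset (ℕ × ℕ) => lam.map fun p => p.1 + b * p.2)
      ({lam : Multiset (ℕ × ℕ) |
          Refines (Multiset.replicate j (1, 0) + Multiset.replicate r (0, 1)) lam} \
        {lam : Multiset (ℕ × ℕ) |
          Refines (Multiset.replicate (j - a) (1, 0) +
            ((a, 0) ::ₘ Multiset.replicate r (0, 1))) lam})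
      ({lam : Multiset ℕ |
          Refines (Multiset.replicate j 1 + Multiset.replicate r b) lam} \
        {lam : Multiset ℕ |
          Refines (Multiset.replicate (j - a) 1 + (a ::ₘ Multiset.replicate r b)) lam}) ∧
    ∀ lam ∈ ({lam : Multiset (ℕ × ℕ) |
          Refines (Multiset.replicate j (1, 0) + Multiset.replicate r (0, 1)) lam} \
        {lam : Multiset (ℕ × ℕ) |
          Refines (Multiset.replicate (j - a) (1, 0) +
            ((a, 0) ::ₘ Multiset.replicate r (0, 1))) lam}),
      multPartition (lam.map fun p => p.1 + b * p.2) = multPartition lam := by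
  classical
  have hb0 : 0 < b := by omega
  set φ : ℕ × ℕ → ℕ := fun p => p.1 + b * p.2 with hφdef
  have hφadd : ∀ x y : ℕ × ℕ, φ (x + y) = φ x + φ y := by
    intro x y; simp only [hφdef, Prod.fst_add, Prod.snd_add]; ring
  set ψ : ℕ × ℕ × ℕ → ℕ × ℕ := fun q => (q.1 + a * q.2.1, q.2.2) with hψdef
  have hψadd : ∀ x y, ψ (x + y) = ψ x + ψ y := by
    intro x y
    simp only [hψdef, Prod.fst_add, Prod.snd_add, Prod.mk.injEq, Prod.mk_add_mk]
    exact ⟨by ring, trivial⟩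
  set ψ' : ℕ × ℕ × ℕ → ℕ := fun q => q.1 + a * q.2.1 + b * q.2.2 with hψ'def
  have hψ'add : ∀ x y, ψ' (x + y) = ψ' x + ψ' y := by
    intro x y; simp only [hψ'def, Prod.fst_add, Prod.snd_add]; ring
  set canon : ℕ → ℕ × ℕ := fun n => (n % b, n / b) with hcanondef
  have hcanφ : ∀ p : ℕ × ℕ, p.1 < b → canon (φ p) = p := by
    intro p hp
    simp only [hcanondef, hφdef]
    refine Prod.ext ?_ ?_
    · simp only [Nat.add_mul_mod_self_left]
      exact Nat.mod_eq_of_lt hp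
    · simp only [Nat.add_mul_div_left _ _ hb0]
      rw [Nat.div_eq_of_lt hp, zero_add]
  -- the four multisets
  set μ0 : Multiset (ℕ × ℕ) :=
    Multiset.replicate j (1, 0) + Multiset.replicate r (0, 1) with hμ0def
  set μ1 : Multiset (ℕ × ℕ) :=
    Multiset.replicate (j - a) (1, 0) + ((a, 0) ::ₘ Multiset.replicate r (0, 1)) with hμ1def
  set ρ0 : Multiset ℕ := Multiset.replicate j 1 + Multiset.replicate r b with hρ0def
  set ρ1 : Multiset ℕ := Multiset.replicate (j - a) 1 + (a ::ₘ Multiset.replicate r b) with hρ1def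
  set μ1' : Multiset (ℕ × ℕ × ℕ) :=
    Multiset.replicate (j - a) (1, 0, 0) + ((0, 1, 0) ::ₘ Multiset.replicate r (0, 0, 1))
    with hμ1'def
  have F1 : μ0.map φ = ρ0 := by
    simp [hμ0def, hρ0def, hφdef, Multiset.map_replicate]
  have F2 : μ1'.map ψ = μ1 := by
    simp [hμ1'def, hμ1def, hψdef, Multiset.map_replicate]
  have F3 : μ1'.map ψ' = ρ1 := by
    simp [hμ1'def, hρ1def, hψ'def, Multiset.map_replicate]
  -- if some element has large first coordinate then μ1 refines
  have hbig : ∀ lam : Multiset (ℕ × ℕ), lam.sum = (j, r) → (0, 0) ∉ lam →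
      ∀ p ∈ lam, a ≤ p.1 → Refines μ1 lam := by
    intro lam hs h0 p hp hap
    have hco : p ::ₘ lam.erase p = lam := Multiset.cons_erase hp
    have hse : p + (lam.erase p).sum = (j, r) := by
      rw [← hs]
      conv_rhs => rw [← hco]
      rw [Multiset.sum_cons]
    have he1 : p.1 + (lam.erase p).sum.1 = j := by
      have := congrArg Prod.fst hse; simpa using this
    have he2 : p.2 + (lam.erase p).sum.2 = r := by
      have := congrArg Prod.snd hse; simpa using this
    have hmsum : ∀ s : Multiset (ℕ × ℕ),
        (s.map fun q => (q.1, (0:ℕ), q.2)).sum = (s.sum.1, 0, s.sum.2) := by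
      intro s
      induction s using Multiset.induction with
      | empty => simp; rfl
      | cons x t ih => simp [ih, Prod.ext_iff]
    set κ : Multiset (ℕ × ℕ × ℕ) :=
      (p.1 - a, 1, p.2) ::ₘ (lam.erase p).map (fun q => (q.1, 0, q.2)) with hκdef
    have hκsum : κ.sum = (j - a, 1, r) := by
      rw [hκdef, Multiset.sum_cons, hmsum]
      refine Prod.ext ?_ (Prod.ext ?_ ?_) <;> simp <;> omega
    have hκ0 : (0, 0, 0) ∉ κ := by
      rw [hκdef]
      simp only [Multiset.mem_cons, Multiset.mem_map, not_or, Prod.mk.injEq]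
      constructor
      · rintro ⟨-, h, -⟩; omega
      · rintro ⟨⟨q1, q2⟩, hq, hq1, -, hq2⟩
        simp only at hq1 hq2
        subst hq1; subst hq2
        exact h0 (Multiset.mem_of_mem_erase hq)
    have hκmap : κ.map ψ = lam := by
      have h1 : ψ (p.1 - a, 1, p.2) = p := by
        simp only [hψdef]
        refine Prod.ext ?_ rfl
        simp; omega
      have h2 : ((lam.erase p).map (fun q => (q.1, (0:ℕ), q.2))).map ψ = lam.erase p := by
        rw [Multiset.map_map]
        refine (Multiset.map_congr rfl ?_).trans (Multiset.map_id _)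
        intro q hq
        simp [hψdef]
      rw [hκdef, Multiset.map_cons, h2, h1, hco]
    have hr := ((triple_char (j - a) r κ).mpr ⟨hκsum, hκ0⟩).map ψ hψadd
    rwa [F2, hκmap] at hr
  -- elements in the domain have small first coordinates
  have hcoord : ∀ lam : Multiset (ℕ × ℕ), lam.sum = (j, r) → (0, 0) ∉ lam →
      ¬ Refines μ1 lam → ∀ p ∈ lam, p.1 < a := by
    intro lam hs h0 hnot p hp
    by_contra hge
    exact hnot (hbig lam hs h0 p hp (le_of_not_gt hge))
  have hcanon : ∀ lam : Multiset (ℕ × ℕ), (∀ p ∈ lam, p.1 < b) →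
      (lam.map φ).map canon = lam := by
    intro lam hcl
    rw [Multiset.map_map]
    refine (Multiset.map_congr rfl ?_).trans (Multiset.map_id _)
    intro p hp
    exact hcanφ p (hcl p hp)
  -- the key: image avoids ρ1
  have hnotρ1 : ∀ lam : Multiset (ℕ × ℕ), lam.sum = (j, r) → (∀ p ∈ lam, p.1 < a) →
      ¬ Refines ρ1 (lam.map φ) := by
    intro lam hs hcl hcon
    rw [← F3] at hcon
    obtain ⟨κ, hκ, hκeq⟩ := exists_of_refines_map ψ' hψ'add hcon
    obtain ⟨hκs, hκ0⟩ := (triple_char _ _ _).mp hκ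
    have hcan : (lam.map φ).map canon = lam := hcanon lam (fun p hp => lt_of_lt_of_le (hcl p hp) hab)
    have hlam2 : lam = (κ.map ψ').map canon := by
      rw [← hκeq]; exact hcan.symm
    -- sum of (ψ' q % b) over κ equals j
    have hsj : (κ.map (fun q => ψ' q % b)).sum = j := by
      have h₁ : lam.map (fun p => p.1) = κ.map (fun q => ψ' q % b) := by
        rw [hlam2, Multiset.map_map, Multiset.map_map]
        rfl
      have h₂ := sum_map_pair lam 1 0
      simp only [one_mul, zero_mul, add_zero] at h₂
      rw [hs] at h₂
      rw [← h₁, h₂]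
    have hw : (κ.map (fun q => q.1 + a * q.2.1)).sum = j := by
      have h₂ := sum_map_triple κ 1 a 0
      simp only [one_mul, zero_mul, add_zero] at h₂
      rw [hκs] at h₂
      simp only at h₂
      rw [h₂]; omega
    have hle : ∀ q ∈ κ, ψ' q % b ≤ q.1 + a * q.2.1 := by
      intro q hq
      have : ψ' q % b = (q.1 + a * q.2.1) % b := by
        simp only [hψ'def, Nat.add_mul_mod_self_left]
      rw [this]
      exact Nat.mod_le _ _
    have heqall := eq_of_le_of_sum_le κ (fun q => ψ' q % b) (fun q => q.1 + a * q.2.1)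
      hle (by rw [hw, hsj])
    have hmid : (κ.map (fun q => q.2.1)).sum = 1 := by
      have h₂ := sum_map_triple κ 0 1 0
      simp only [one_mul, zero_mul, add_zero, zero_add] at h₂
      rw [hκs] at h₂
      simpa using h₂
    have hex : ∃ q ∈ κ, q.2.1 ≠ 0 := by
      by_contra hall
      push_neg at hall
      have : (κ.map (fun q => q.2.1)).sum = 0 := by
        refine Multiset.sum_eq_zero ?_
        intro x hx
        obtain ⟨q, hq, rfl⟩ := Multiset.mem_map.mp hx
        exact hall q hq
      omega
    obtain ⟨q0, hq0, hq0s⟩ := hex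
    have h1' : ψ' q0 % b = q0.1 + a * q0.2.1 := heqall q0 hq0
    have h2' : ψ' q0 % b < a := by
      have hmem : canon (ψ' q0) ∈ lam := by
        rw [hlam2]
        exact Multiset.mem_map_of_mem canon (Multiset.mem_map_of_mem ψ' hq0)
      have := hcl _ hmem
      simpa [hcanondef] using this
    have h3' : a ≤ a * q0.2.1 := Nat.le_mul_of_pos_right a (by omega)
    omega
  -- now assemble
  refine ⟨⟨?_, ?_, ?_⟩, ?_⟩
  · -- MapsTo
    intro lam hlam
    simp only [Set.mem_diff, Set.mem_setOf_eq] at hlam ⊢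
    obtain ⟨h0, h1⟩ := hlam
    obtain ⟨hs, hz⟩ := (pair_char j r lam).mp h0
    refine ⟨?_, ?_⟩
    · have := h0.map φ hφadd
      rwa [F1] at this
    · exact hnotρ1 lam hs (hcoord lam hs hz h1)
  · -- InjOn
    intro lam hlam lam' hlam' heq
    simp only [Set.mem_diff, Set.mem_setOf_eq] at hlam hlam'
    obtain ⟨hs, hz⟩ := (pair_char j r lam).mp hlam.1
    obtain ⟨hs', hz'⟩ := (pair_char j r lam').mp hlam'.1
    have hc := hcoord lam hs hz hlam.2
    have hc' := hcoord lam' hs' hz' hlam'.2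
    have e1 := hcanon lam (fun p hp => lt_of_lt_of_le (hc p hp) hab)
    have e2 := hcanon lam' (fun p hp => lt_of_lt_of_le (hc' p hp) hab)
    simp only at heq
    rw [← e1, ← e2, heq]
  · -- SurjOn
    intro ν hν
    simp only [Set.mem_diff, Set.mem_setOf_eq] at hν
    obtain ⟨h0, h1⟩ := hν
    rw [← F1] at h0
    obtain ⟨lam, href, hνeq⟩ := exists_of_refines_map φ hφadd h0
    refine ⟨lam, ?_, hνeq.symm⟩
    simp only [Set.mem_diff, Set.mem_setOf_eq]
    refine ⟨href, ?_⟩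
    intro hc
    apply h1
    have := hc.map φ hφadd
    rw [← F2, Multiset.map_map] at this
    rw [← F3, hνeq]
    have hcomp : Multiset.map (φ ∘ ψ) μ1' = Multiset.map ψ' μ1' := rfl
    rw [← hcomp]
    exact this
  · -- multPartition
    intro lam hlam
    simp only [Set.mem_diff, Set.mem_setOf_eq] at hlam
    obtain ⟨hs, hz⟩ := (pair_char j r lam).mp hlam.1
    have hc := hcoord lam hs hz hlam.2
    refine multPartition_map φ lam ?_
    intro x hx y hy hxy
    have ex := hcanφ x (lt_of_lt_of_le (hc x hx) hab)
    have ey := hcanφ y (lt_of_lt_of_le (hc y hy) hab)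
    rw [← ex, ← ey, hxy]
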